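/- Let n ∈ ℕ and let I be a finite nonempty index set. For each i ∈ I let A_i be a real m_i × n matrix, b_i ∈ ℝ^{m_i}, and K_i ⊆ ℝ^{m_i} a proper cone (closed, convex, pointed, with nonempty interior), and set P_i = {x ∈ ℝ^n : A_i x − b_i ∈ K_i}. Let P = {(x, (v_i)_{i∈I}, (λ_i)_{i∈I}) : x = Σ_{i∈I} v_i, Σ_{i∈I} λ_i = 1, λ_i ≥ 0 for all i ∈ I, and A_i v_i − λ_i b_i ∈ K_i for all i ∈ I}. Suppose there exist a convex closed set W ⊆ ℝ^n and, for each i ∈ I, a closed, bounded, convex, nonempty set S_i ⊆ ℝ^n such that P_i = S_i + W (Minkowski sum). Then conv(⋃_{i∈I} P_i) = proj_x(P) = cl conv(⋃_{i∈I} P_i). -/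

import Mathlib

open Matrix Pointwise

section AuxHelpers
open Filter Topology Bornology

/-- Recession-type lemma: if `c + k • v` can be written as (bounded) + (element of `W`)
for every `k : ℕ`, then `v` is a recession direction of the closed convex set `W`. -/
lemma aux_rec_mem {E : Type*} [NormedAddCommGroup E] [NormedSpace ℝ E]
    {W : Set E} (hWc : IsClosed W) (hWconv : Convex ℝ W)
    {v c w0 : E} (hw0 : w0 ∈ W) {C : ℝ}
    (h : ∀ k : ℕ, ∃ s : E, ‖s‖ ≤ C ∧ c + (k : ℝ) • v - s ∈ W) :
    w0 + v ∈ W := by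
  choose s hsC hsW using h
  have hmem : ∀ k : ℕ, 1 ≤ k → w0 + v + ((k : ℝ))⁻¹ • (c - s k - w0) ∈ W := by
    intro k hk
    have hkpos : (0 : ℝ) < (k : ℝ) := by exact_mod_cast hk
    have h1 : (0 : ℝ) ≤ 1 - (k : ℝ)⁻¹ := by
      rw [sub_nonneg]
      exact inv_le_one_of_one_le₀ (by exact_mod_cast hk)
    have h2 : (0 : ℝ) ≤ (k : ℝ)⁻¹ := by positivity
    have hc := hWconv hw0 (hsW k) h1 h2 (by ring)
    have hkv : (k : ℝ)⁻¹ • ((k : ℝ) • v) = v := by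
      rw [smul_smul, inv_mul_cancel₀ hkpos.ne', one_smul]
    have heq : w0 + v + ((k : ℝ))⁻¹ • (c - s k - w0)
        = (1 - (k : ℝ)⁻¹) • w0 + (k : ℝ)⁻¹ • (c + (k : ℝ) • v - s k) := by
      simp only [sub_smul, one_smul, smul_sub, smul_add, hkv]; abel
    rw [heq]; exact hc
  have hlim0 : Tendsto (fun k : ℕ => ((k : ℝ))⁻¹ • (c - s k - w0)) atTop (𝓝 0) := by
    refine squeeze_zero_norm (a := fun k : ℕ => (‖c‖ + C + ‖w0‖) * ((k : ℝ))⁻¹) ?_ ?_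
    · intro k
      rw [norm_smul]
      have hb : ‖c - s k - w0‖ ≤ ‖c‖ + C + ‖w0‖ := by
        calc ‖c - s k - w0‖ ≤ ‖c - s k‖ + ‖w0‖ := norm_sub_le _ _
          _ ≤ ‖c‖ + ‖s k‖ + ‖w0‖ := by linarith [norm_sub_le c (s k)]
          _ ≤ ‖c‖ + C + ‖w0‖ := by linarith [hsC k]
      have hn : ‖((k : ℝ))⁻¹‖ = ((k : ℝ))⁻¹ := by
        rw [Real.norm_eq_abs, abs_of_nonneg (by positivity)]
      rw [hn, mul_comm]
      exact mul_le_mul_of_nonneg_right hb (by positivity)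
    · have h0 : Filter.Tendsto (fun k : ℕ => ((k : ℝ))⁻¹) atTop (𝓝 0) := by
        simpa using tendsto_one_div_atTop_nhds_zero_nat (𝕜 := ℝ)
      have := h0.const_mul (‖c‖ + C + ‖w0‖)
      simpa using this
  have hlim : Tendsto (fun k : ℕ => w0 + v + ((k : ℝ))⁻¹ • (c - s k - w0)) atTop (𝓝 (w0 + v)) := by
    simpa using tendsto_const_nhds.add hlim0
  exact hWc.mem_of_tendsto hlim (eventually_atTop.2 ⟨1, hmem⟩)

/-- The convex hull of a finite union of compact convex nonempty sets is compact. -/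
lemma aux_isCompact_convexHull_iUnion {n : ℕ} {I : Type*} [Fintype I] [Nonempty I]
    (S : I → Set (Fin n → ℝ)) (hSc : ∀ i, IsCompact (S i)) (hconv : ∀ i, Convex ℝ (S i))
    (hne : ∀ i, (S i).Nonempty) :
    IsCompact (convexHull ℝ (⋃ i, S i)) := by
  classical
  set T : Set ((I → ℝ) × (I → Fin n → ℝ)) :=
    (stdSimplex ℝ I) ×ˢ (Set.univ.pi S) with hT
  set f : (I → ℝ) × (I → Fin n → ℝ) → (Fin n → ℝ) := fun p => ∑ i : I, p.1 i • p.2 i with hf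
  have hTc : IsCompact T := (isCompact_stdSimplex (𝕜 := ℝ) (ι := I)).prod (isCompact_univ_pi hSc)
  have hfc : Continuous f := by
    apply continuous_finset_sum
    intro i _
    exact ((continuous_apply i).comp continuous_fst).smul ((continuous_apply i).comp continuous_snd)
  have himg : f '' T = convexHull ℝ (⋃ i, S i) := by
    apply Set.Subset.antisymm
    · rintro _ ⟨⟨lam, s⟩, ⟨hl, hs⟩, rfl⟩
      exact (convex_convexHull ℝ _).sum_mem (fun i _ => hl.1 i) hl.2
        (fun i _ => subset_convexHull ℝ _ (Set.mem_iUnion.2 ⟨i, hs i (Set.mem_univ i)⟩))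
    · apply convexHull_min
      · rintro x hx
        obtain ⟨j, hj⟩ := Set.mem_iUnion.mp hx
        refine ⟨⟨fun i => if i = j then 1 else 0,
          Function.update (fun i => (hne i).some) j x⟩, ⟨⟨?_, ?_⟩, ?_⟩, ?_⟩
        · intro i; dsimp only; split <;> norm_num
        · simp
        · intro i _
          by_cases h : i = j
          · subst h; simpa using hj
          · simpa [Function.update_of_ne h] using (hne i).some_mem
        · simp only [hf]
          rw [Finset.sum_eq_single j]
          · simp
          · intro i _ hij; simp [hij]
          · intro h; exact absurd (Finset.mem_univ j) h
      · rintro _ ⟨⟨lam, s⟩, ⟨hl, hs⟩, rfl⟩ _ ⟨⟨mu, t⟩, ⟨hm, ht⟩, rfl⟩ θ σ hθ hσ hθσ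
        set nu : I → ℝ := fun i => θ * lam i + σ * mu i with hnu
        have hnunn : ∀ i, 0 ≤ nu i := fun i =>
          add_nonneg (mul_nonneg hθ (hl.1 i)) (mul_nonneg hσ (hm.1 i))
        refine ⟨⟨nu, fun i => if h : nu i = 0 then s i
          else ((θ * lam i) / nu i) • s i + ((σ * mu i) / nu i) • t i⟩, ⟨⟨?_, ?_⟩, ?_⟩, ?_⟩
        · exact hnunn
        · simp only [hnu]
          rw [Finset.sum_add_distrib, ← Finset.mul_sum, ← Finset.mul_sum, hl.2, hm.2]
          simpa using hθσ
        · intro i _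
          dsimp only
          split
          · exact hs i (Set.mem_univ i)
          · rename_i h
            exact hconv i (hs i (Set.mem_univ i)) (ht i (Set.mem_univ i))
              (div_nonneg (mul_nonneg hθ (hl.1 i)) (hnunn i))
              (div_nonneg (mul_nonneg hσ (hm.1 i)) (hnunn i))
              (by rw [← add_div, div_self h])
        · simp only [hf]
          have hterm : ∀ i : I, nu i • (if h : nu i = 0 then s i
              else ((θ * lam i) / nu i) • s i + ((σ * mu i) / nu i) • t i)
              = (θ * lam i) • s i + (σ * mu i) • t i := by
            intro i
            split
            · rename_i h
              have h' : θ * lam i + σ * mu i = 0 := h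
              have h1 : θ * lam i = 0 := by
                linarith [mul_nonneg hθ (hl.1 i), mul_nonneg hσ (hm.1 i)]
              have h2 : σ * mu i = 0 := by
                linarith [mul_nonneg hθ (hl.1 i), mul_nonneg hσ (hm.1 i)]
              simp [h, h1, h2]
            · rename_i h
              rw [smul_add, smul_smul, smul_smul, mul_div_cancel₀ _ h, mul_div_cancel₀ _ h]
          rw [Finset.sum_congr rfl (fun i _ => hterm i), Finset.sum_add_distrib]
          rw [Finset.smul_sum, Finset.smul_sum]
          congr 1 <;> exact Finset.sum_congr rfl (fun i _ => (smul_smul _ _ _).symm)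
  rw [← himg]
  exact hTc.image hfc
end AuxHelpers

/-- If the conic disjuncts `P i = {x | A i x - b i ∈ K i}` (with
`K i` proper cones) all decompose as `P i = S i + W` with `S i` compact-like
(closed, bounded, convex, nonempty) and `W` a common closed convex set, then the
convex hull of the union, the projection of the hull-reformulation set, and the
closed convex hull of the union all coincide. -/
theorem conv_union_eq_proj_hull_eq_closure
    {n : ℕ} {I : Type*} [Fintype I] [Nonempty I]
    (m : I → ℕ)
    (A : ∀ i : I, Matrix (Fin (m i)) (Fin n) ℝ)
    (b : ∀ i : I, Fin (m i) → ℝ)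
    (K : ∀ i : I, Set (Fin (m i) → ℝ))
    (hKclosed : ∀ i, IsClosed (K i))
    (hKconvex : ∀ i, Convex ℝ (K i))
    (hKcone : ∀ i, ∀ z ∈ K i, ∀ c : ℝ, 0 ≤ c → c • z ∈ K i)
    (hKpointed : ∀ i, K i ∩ (-(K i)) = {0})
    (hKint : ∀ i, (interior (K i)).Nonempty)
    (W : Set (Fin n → ℝ)) (hWconvex : Convex ℝ W) (hWclosed : IsClosed W)
    (S : I → Set (Fin n → ℝ))
    (hSclosed : ∀ i, IsClosed (S i))
    (hSbounded : ∀ i, Bornology.IsBounded (S i))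
    (hSconvex : ∀ i, Convex ℝ (S i))
    (hSne : ∀ i, (S i).Nonempty)
    (hdecomp : ∀ i, {x : Fin n → ℝ | A i *ᵥ x - b i ∈ K i} = S i + W) :
    convexHull ℝ (⋃ i : I, {x : Fin n → ℝ | A i *ᵥ x - b i ∈ K i}) =
      {x : Fin n → ℝ | ∃ (v : I → (Fin n → ℝ)) (lam : I → ℝ),
        x = ∑ i : I, v i ∧
        ∑ i : I, lam i = 1 ∧
        (∀ i : I, 0 ≤ lam i) ∧
        (∀ i : I, A i *ᵥ v i - lam i • b i ∈ K i)} ∧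
    {x : Fin n → ℝ | ∃ (v : I → (Fin n → ℝ)) (lam : I → ℝ),
        x = ∑ i : I, v i ∧
        ∑ i : I, lam i = 1 ∧
        (∀ i : I, 0 ≤ lam i) ∧
        (∀ i : I, A i *ᵥ v i - lam i • b i ∈ K i)} =
      closure (convexHull ℝ (⋃ i : I, {x : Fin n → ℝ | A i *ᵥ x - b i ∈ K i})) := by
  classical
  set Q : Set (Fin n → ℝ) := {x : Fin n → ℝ | ∃ (v : I → (Fin n → ℝ)) (lam : I → ℝ),
        x = ∑ i : I, v i ∧
        ∑ i : I, lam i = 1 ∧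
        (∀ i : I, 0 ≤ lam i) ∧
        (∀ i : I, A i *ᵥ v i - lam i • b i ∈ K i)} with hQdef
  by_cases hWne : W.Nonempty
  · obtain ⟨w₀, hw₀⟩ := hWne
    have hK0 : ∀ i, (0 : Fin (m i) → ℝ) ∈ K i := by
      intro i
      obtain ⟨z, hz⟩ := hKint i
      simpa using hKcone i z (interior_subset hz) 0 le_rfl
    have hKadd : ∀ i, ∀ z₁ ∈ K i, ∀ z₂ ∈ K i, z₁ + z₂ ∈ K i := by
      intro i z₁ hz₁ z₂ hz₂
      have h := hKconvex i hz₁ hz₂ (by norm_num : (0:ℝ) ≤ 1/2) (by norm_num : (0:ℝ) ≤ 1/2)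
        (by norm_num)
      have h2 := hKcone i _ h 2 (by norm_num)
      have : (2 : ℝ) • ((1/2 : ℝ) • z₁ + (1/2 : ℝ) • z₂) = z₁ + z₂ := by
        rw [smul_add, smul_smul, smul_smul]; norm_num
      rwa [this] at h2
    -- Step A : the hull equals convexHull (⋃ S) + W, which is closed
    have hUnion : (⋃ i : I, {x : Fin n → ℝ | A i *ᵥ x - b i ∈ K i}) = (⋃ i, S i) + W := by
      simp_rw [hdecomp]
      exact (Set.iUnion_add _ _).symm
    have hhull : convexHull ℝ (⋃ i : I, {x : Fin n → ℝ | A i *ᵥ x - b i ∈ K i})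
        = convexHull ℝ (⋃ i, S i) + W := by
      rw [hUnion, convexHull_add, hWconvex.convexHull_eq]
    have hScomp : ∀ i, IsCompact (S i) := fun i =>
      Metric.isCompact_of_isClosed_isBounded (hSclosed i) (hSbounded i)
    have hcomp : IsCompact (convexHull ℝ (⋃ i, S i)) :=
      aux_isCompact_convexHull_iUnion S hScomp hSconvex hSne
    have hclosed : IsClosed (convexHull ℝ (⋃ i : I, {x : Fin n → ℝ | A i *ᵥ x - b i ∈ K i})) := by
      rw [hhull]
      exact hWclosed.add_left_of_isCompact hcomp
    -- Step B : hull ⊆ Q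
    have hQconv : Convex ℝ Q := by
      rintro x ⟨v, lam, rfl, hsum, hnn, hmem⟩ y ⟨u, mu, rfl, hsum', hnn', hmem'⟩ θ σ hθ hσ hθσ
      refine ⟨fun i => θ • v i + σ • u i, fun i => θ * lam i + σ * mu i, ?_, ?_, ?_, ?_⟩
      · rw [Finset.sum_add_distrib, ← Finset.smul_sum, ← Finset.smul_sum]
      · rw [Finset.sum_add_distrib, ← Finset.mul_sum, ← Finset.mul_sum, hsum, hsum']
        simpa using hθσ
      · intro i
        exact add_nonneg (mul_nonneg hθ (hnn i)) (mul_nonneg hσ (hnn' i))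
      · intro i
        have hcc := hKconvex i (hmem i) (hmem' i) hθ hσ hθσ
        have heq : A i *ᵥ (θ • v i + σ • u i) - (θ * lam i + σ * mu i) • b i
            = θ • (A i *ᵥ v i - lam i • b i) + σ • (A i *ᵥ u i - mu i • b i) := by
          rw [Matrix.mulVec_add, Matrix.mulVec_smul, Matrix.mulVec_smul]
          module
        rw [heq]; exact hcc
    have hPQ : ∀ i, {x : Fin n → ℝ | A i *ᵥ x - b i ∈ K i} ⊆ Q := by
      intro i x hx
      refine ⟨fun j => if j = i then x else 0, fun j => if j = i then 1 else 0, ?_, ?_, ?_, ?_⟩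
      · rw [Finset.sum_ite_eq' Finset.univ i]; simp
      · rw [Finset.sum_ite_eq' Finset.univ i]; simp
      · intro j; dsimp only; split <;> norm_num
      · intro j
        by_cases h : j = i
        · subst h; simpa using hx
        · simpa [h] using hK0 j
    have hsub1 : convexHull ℝ (⋃ i : I, {x : Fin n → ℝ | A i *ᵥ x - b i ∈ K i}) ⊆ Q :=
      convexHull_min (Set.iUnion_subset hPQ) hQconv
    -- Step C : Q ⊆ convexHull (⋃ S) + W
    have hsub2 : Q ⊆ convexHull ℝ (⋃ i, S i) + W := by
      rintro x ⟨v, lam, rfl, hsum, hnn, hmem⟩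
      have hdec : ∀ i, 0 < lam i → ∃ s ∈ S i, ∃ w ∈ W, s + w = (lam i)⁻¹ • v i := by
        intro i hi
        have h2 : (lam i)⁻¹ • (A i *ᵥ v i - lam i • b i) ∈ K i :=
          hKcone i _ (hmem i) _ (by positivity)
        have h3 : (lam i)⁻¹ • (A i *ᵥ v i - lam i • b i)
            = A i *ᵥ ((lam i)⁻¹ • v i) - b i := by
          rw [Matrix.mulVec_smul, smul_sub, smul_smul, inv_mul_cancel₀ hi.ne', one_smul]
        rw [h3] at h2
        have hx : (lam i)⁻¹ • v i ∈ S i + W := by rw [← hdecomp i]; exact h2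
        exact Set.mem_add.mp hx
      choose! sf hsf wf hwf heqf using hdec
      set s' : I → (Fin n → ℝ) := fun i => if 0 < lam i then sf i else (hSne i).some with hs'
      set w' : I → (Fin n → ℝ) := fun i => if 0 < lam i then wf i else w₀ with hw'
      set g : I → (Fin n → ℝ) := fun i => if 0 < lam i then 0 else v i with hg
      have hvdec : ∀ i, v i = lam i • s' i + (lam i • w' i + g i) := by
        intro i
        by_cases hi : 0 < lam i
        · simp only [hs', hw', hg, if_pos hi]
          have := heqf i hi
          rw [add_zero, ← smul_add, this, smul_smul, mul_inv_cancel₀ hi.ne', one_smul]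
        · have h0 : lam i = 0 := le_antisymm (not_lt.mp hi) (hnn i)
          simp [hs', hw', hg, hi, h0]
      have hs'mem : ∀ i, s' i ∈ S i := by
        intro i; simp only [hs']
        split
        · exact hsf i (by assumption)
        · exact (hSne i).some_mem
      have hw'mem : ∀ i, w' i ∈ W := by
        intro i; simp only [hw']
        split
        · exact hwf i (by assumption)
        · exact hw₀
      have haS : (∑ i : I, lam i • s' i) ∈ convexHull ℝ (⋃ i, S i) :=
        (convex_convexHull ℝ _).sum_mem (fun i _ => hnn i) hsum
          (fun i _ => subset_convexHull ℝ _ (Set.mem_iUnion.2 ⟨i, hs'mem i⟩))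
      have hbW : (∑ i : I, lam i • w' i) ∈ W :=
        hWconvex.sum_mem (fun i _ => hnn i) hsum (fun i _ => hw'mem i)
      -- recession directions
      let M : AddSubmonoid (Fin n → ℝ) :=
        { carrier := {u | ∀ w ∈ W, w + u ∈ W}
          add_mem' := fun ha hb w hw => by
            rw [← add_assoc]
            exact hb _ (ha w hw)
          zero_mem' := fun w hw => by simpa using hw }
      have hgM : ∀ i, g i ∈ M := by
        intro i
        simp only [hg]
        split
        · exact M.zero_mem
        · rename_i hi
          have h0 : lam i = 0 := le_antisymm (not_lt.mp hi) (hnn i)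
          have hAv : A i *ᵥ v i ∈ K i := by
            have := hmem i
            rwa [h0, zero_smul, sub_zero] at this
          intro w hw
          obtain ⟨C, hC⟩ := isBounded_iff_forall_norm_le.mp (hSbounded i)
          set s₀ : Fin n → ℝ := (hSne i).some with hs₀
          apply aux_rec_mem hWclosed hWconvex hw (C := C) (c := s₀ + w₀)
          intro k
          have hcmem : A i *ᵥ (s₀ + w₀) - b i ∈ K i := by
            have hmm : s₀ + w₀ ∈ S i + W := Set.add_mem_add (hSne i).some_mem hw₀
            rw [← hdecomp i] at hmm
            exact hmm
          have hkA : (k : ℝ) • (A i *ᵥ v i) ∈ K i :=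
            hKcone i _ hAv _ (by positivity)
          have hsumK := hKadd i _ hcmem _ hkA
          have heq2 : A i *ᵥ (s₀ + w₀ + (k : ℝ) • v i) - b i
              = (A i *ᵥ (s₀ + w₀) - b i) + (k : ℝ) • (A i *ᵥ v i) := by
            rw [Matrix.mulVec_add, Matrix.mulVec_smul]; abel
          have hck : s₀ + w₀ + (k : ℝ) • v i ∈ S i + W := by
            rw [← hdecomp i]
            show A i *ᵥ (s₀ + w₀ + (k : ℝ) • v i) - b i ∈ K i
            rw [heq2]; exact hsumK
          obtain ⟨sk, hsk, wk, hwk, hswk⟩ := Set.mem_add.mp hck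
          refine ⟨sk, hC sk hsk, ?_⟩
          have : s₀ + w₀ + (k : ℝ) • v i - sk = wk := by rw [← hswk]; abel
          rwa [this]
      have hgsum : (∑ i : I, g i) ∈ M := sum_mem (fun i _ => hgM i)
      have hWfin : (∑ i : I, lam i • w' i) + (∑ i : I, g i) ∈ W := hgsum _ hbW
      refine Set.mem_add.mpr ⟨∑ i : I, lam i • s' i, haS,
        (∑ i : I, lam i • w' i) + (∑ i : I, g i), hWfin, ?_⟩
      rw [Finset.sum_congr rfl (fun i _ => hvdec i), Finset.sum_add_distrib,
        Finset.sum_add_distrib]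
    have h1 : convexHull ℝ (⋃ i : I, {x : Fin n → ℝ | A i *ᵥ x - b i ∈ K i}) = Q :=
      Set.Subset.antisymm hsub1 (hsub2.trans hhull.symm.subset)
    exact ⟨h1, by rw [hclosed.closure_eq]; exact h1.symm⟩
  · have hWe : W = ∅ := Set.not_nonempty_iff_eq_empty.mp hWne
    have hPe : ∀ i, {x : Fin n → ℝ | A i *ᵥ x - b i ∈ K i} = (∅ : Set (Fin n → ℝ)) := by
      intro i; rw [hdecomp i, hWe, Set.add_empty]
    have hQe : Q = ∅ := by
      ext x
      simp only [Set.mem_empty_iff_false, iff_false, hQdef, Set.mem_setOf_eq]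
      rintro ⟨v, lam, hx, hsum, hnn, hmem⟩
      obtain ⟨j, hj⟩ : ∃ j, lam j ≠ 0 := by
        by_contra hall
        push_neg at hall
        simp [hall] at hsum
      have hjpos : 0 < lam j := lt_of_le_of_ne (hnn j) (Ne.symm hj)
      have h2 : (lam j)⁻¹ • (A j *ᵥ v j - lam j • b j) ∈ K j :=
        hKcone j _ (hmem j) _ (by positivity)
      have h3 : (lam j)⁻¹ • (A j *ᵥ v j - lam j • b j)
          = A j *ᵥ ((lam j)⁻¹ • v j) - b j := by
        rw [Matrix.mulVec_smul, smul_sub, smul_smul, inv_mul_cancel₀ hj, one_smul]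
      rw [h3] at h2
      have : (lam j)⁻¹ • v j ∈ {x : Fin n → ℝ | A j *ᵥ x - b j ∈ K j} := h2
      rw [hPe j] at this
      exact this
    have hUe : convexHull ℝ (⋃ i : I, {x : Fin n → ℝ | A i *ᵥ x - b i ∈ K i}) = ∅ := by
      simp [hPe]
    rw [hQe, hUe]
    simp
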